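/- arXiv:2010.15505 — 2 statements merged into one kernel-verified Lean document; each statement's English description precedes it below -/
import Mathlib

section
/- Constants relations for lower characteristic (1,1): with ξ = Θ[0,0;1,1](0,0) and ζ = Θ[1,1;1,1](0,0), one has θ[0,0;1,1](0,0) · θ[0,0;0,0](0,0) = ξ² + ζ² and θ[1,1;1,1](0,0) · θ[1,1;0,0](0,0) = 2ξζ. -/
open Complex

/-- Genus-two theta function with real characteristics `a c b d`
(upper characteristics `a, c`, lower characteristics `b, d`),
moduli `τ₁ τ₂ τ₁₂` and complex arguments `x y`. -/
noncomputable def theta (τ₁ τ₂ τ₁₂ : ℂ) (a c b d : ℝ) (x y : ℂ) : ℂ :=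
  ∑' p : ℤ × ℤ,
    Complex.exp
      ((Real.pi : ℂ) * Complex.I *
          (τ₁ * ((p.1 : ℂ) + (a : ℂ) / 2) ^ 2 + τ₂ * ((p.2 : ℂ) + (c : ℂ) / 2) ^ 2 +
            2 * τ₁₂ * ((p.1 : ℂ) + (a : ℂ) / 2) * ((p.2 : ℂ) + (c : ℂ) / 2)) +
        2 * (Real.pi : ℂ) * Complex.I *
          (((p.1 : ℂ) + (a : ℂ) / 2) * (x + (b : ℂ) / 2) +
            ((p.2 : ℂ) + (c : ℂ) / 2) * (y + (d : ℂ) / 2)))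

/-- The same theta function with doubled moduli `2τ₁, 2τ₂, 2τ₁₂`. -/
noncomputable def Theta2 (τ₁ τ₂ τ₁₂ : ℂ) (a c b d : ℝ) (x y : ℂ) : ℂ :=
  theta (2 * τ₁) (2 * τ₂) (2 * τ₁₂) a c b d x y

/-! ### Auxiliary machinery -/

/-- Canonical form for the terms of the theta series involved. -/
noncomputable def Tm (σ₁ σ₂ σ₁₂ : ℂ) (α : ℝ) (δ e : ℤ) (p : ℤ × ℤ) : ℂ :=
  Complex.exp ((Real.pi : ℂ) * Complex.I *
      (σ₁ * ((p.1 : ℂ) + (α : ℂ)) ^ 2 + σ₂ * ((p.2 : ℂ) + (α : ℂ)) ^ 2 +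
        2 * σ₁₂ * ((p.1 : ℂ) + (α : ℂ)) * ((p.2 : ℂ) + (α : ℂ))) +
    (Real.pi : ℂ) * Complex.I * ((δ : ℂ) * ((p.1 : ℂ) + (p.2 : ℂ)) + (e : ℂ)))

lemma norm_Tm (σ₁ σ₂ σ₁₂ : ℂ) (α : ℝ) (δ e : ℤ) (p : ℤ × ℤ) :
    ‖Tm σ₁ σ₂ σ₁₂ α δ e p‖ =
      Real.exp (-(Real.pi * (σ₁.im * ((p.1 : ℝ) + α) ^ 2 + σ₂.im * ((p.2 : ℝ) + α) ^ 2 +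
        2 * σ₁₂.im * ((p.1 : ℝ) + α) * ((p.2 : ℝ) + α)))) := by
  rw [Tm, Complex.norm_exp]
  congr 1
  have h1 : ((p.1 : ℂ) + (α : ℂ)) = (((p.1 : ℝ) + α : ℝ) : ℂ) := by push_cast; ring
  have h2 : ((p.2 : ℂ) + (α : ℂ)) = (((p.2 : ℝ) + α : ℝ) : ℂ) := by push_cast; ring
  rw [h1, h2]
  simp [Complex.add_re, Complex.mul_re, Complex.mul_im, Complex.add_im, pow_two,
    Complex.ofReal_re, Complex.ofReal_im, Complex.intCast_re, Complex.intCast_im]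

lemma summable_gauss_int (c : ℝ) (hc : 0 < c) (α : ℝ) :
    Summable fun n : ℤ => Real.exp (-(c * ((n : ℝ) + α) ^ 2)) := by
  have h := summable_pow_mul_jacobiTheta₂_term_bound (c * |α| / Real.pi)
    (T := c / Real.pi) (by positivity) 0
  refine h.of_nonneg_of_le (fun n => (Real.exp_pos _).le) fun n => ?_
  simp only [pow_zero, one_mul]
  rw [Real.exp_le_exp]
  have h1 : -(α * (n:ℝ)) ≤ |α| * |(n:ℝ)| := by rw [← abs_mul]; exact neg_le_abs _
  have key : -Real.pi * (c/Real.pi * (n:ℝ)^2 - 2*(c*|α|/Real.pi) * (((|n| : ℤ)):ℝ))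
      = -(c*(n:ℝ)^2) + 2*c*(|α| * |(n:ℝ)|) := by
    push_cast
    field_simp
    ring
  rw [key]
  nlinarith [mul_nonneg hc.le (sq_nonneg α), mul_le_mul_of_nonneg_left h1 hc.le]

lemma summable_exp_quad {t₁ t₂ t : ℝ} (h₁ : 0 < t₁) (h₂ : 0 < t₂) (h12 : t ^ 2 < t₁ * t₂)
    (α : ℝ) :
    Summable fun p : ℤ × ℤ => Real.exp (-(Real.pi * (t₁ * ((p.1 : ℝ) + α) ^ 2 +
      t₂ * ((p.2 : ℝ) + α) ^ 2 + 2 * t * ((p.1 : ℝ) + α) * ((p.2 : ℝ) + α)))) := by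
  set ε := (t₁ * t₂ - t ^ 2) / (t₁ + t₂) with hε
  have hεpos : 0 < ε := div_pos (by nlinarith) (by linarith)
  have key : ∀ u v : ℝ, ε * (u ^ 2 + v ^ 2) ≤ t₁ * u ^ 2 + t₂ * v ^ 2 + 2 * t * u * v := by
    intro u v
    rw [hε, div_mul_eq_mul_div, div_le_iff₀ (by linarith)]
    nlinarith [sq_nonneg (t₁ * u + t * v), sq_nonneg (t₂ * v + t * u)]
  have hb := (summable_gauss_int (Real.pi * ε) (by positivity) α).mul_of_nonneg
    (summable_gauss_int (Real.pi * ε) (by positivity) α)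
    (fun _ => (Real.exp_pos _).le) (fun _ => (Real.exp_pos _).le)
  refine hb.of_nonneg_of_le (fun _ => (Real.exp_pos _).le) fun p => ?_
  rw [← Real.exp_add, Real.exp_le_exp]
  have hk := key ((p.1 : ℝ) + α) ((p.2 : ℝ) + α)
  nlinarith [mul_le_mul_of_nonneg_left hk Real.pi_pos.le]

lemma summable_norm_Tm {σ₁ σ₂ σ₁₂ : ℂ} (h₁ : 0 < σ₁.im) (h₂ : 0 < σ₂.im)
    (h12 : σ₁₂.im ^ 2 < σ₁.im * σ₂.im) (α : ℝ) (δ e : ℤ) :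
    Summable fun p : ℤ × ℤ => ‖Tm σ₁ σ₂ σ₁₂ α δ e p‖ := by
  simp only [norm_Tm]
  exact summable_exp_quad h₁ h₂ h12 α

lemma exp_eq_neg_exp {X Y : ℂ} (k : ℤ) (h : X = Y + (2 * (k:ℂ) + 1) * ((Real.pi:ℂ) * I)) :
    Complex.exp X = -Complex.exp Y := by
  have h2 : X = Y + (k:ℂ) * (2 * (Real.pi:ℂ) * I) + (Real.pi:ℂ) * I := by rw [h]; ring
  rw [h2, Complex.exp_add, Complex.exp_add, Complex.exp_int_mul_two_pi_mul_I,
    Complex.exp_pi_mul_I]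
  ring

def iB (b : Bool) : ℤ := cond b 1 0

/-- The splitting of a pair of pairs of integers according to sums/differences and parities. -/
def pairEquiv : ((Bool × Bool) × ((ℤ × ℤ) × (ℤ × ℤ))) ≃ ((ℤ × ℤ) × (ℤ × ℤ)) where
  toFun w := ((w.2.1.1 + w.2.1.2 + iB w.1.1, w.2.2.1 + w.2.2.2 + iB w.1.2),
              (w.2.1.1 - w.2.1.2, w.2.2.1 - w.2.2.2))
  invFun z :=
    ((decide ((z.1.1 - z.2.1) % 2 = 1), decide ((z.1.2 - z.2.2) % 2 = 1)),
     ((z.2.1 + (z.1.1 - z.2.1) / 2, (z.1.1 - z.2.1) / 2),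
      (z.2.2 + (z.1.2 - z.2.2) / 2, (z.1.2 - z.2.2) / 2)))
  left_inv := by
    rintro ⟨⟨e1, e2⟩, ⟨⟨a, b⟩, ⟨c, d⟩⟩⟩
    cases e1 <;> cases e2 <;>
      simp only [iB, cond_true, cond_false, Prod.mk.injEq, decide_eq_true_eq,
        decide_eq_false_iff_not] <;>
      refine ⟨⟨?_, ?_⟩, ⟨?_, ?_⟩, ⟨?_, ?_⟩⟩ <;> grind
  right_inv := by
    rintro ⟨⟨m, n⟩, ⟨m', n'⟩⟩
    by_cases h1 : (m - m') % 2 = 1 <;> by_cases h2 : (n - n') % 2 = 1 <;>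
      simp only [h1, h2, iB, decide_true, decide_false, cond_true, cond_false,
        Prod.mk.injEq, decide_eq_true_eq, decide_eq_false_iff_not] <;>
      refine ⟨⟨?_, ?_⟩, ⟨?_, ?_⟩⟩ <;> omega

lemma tsum_eq_four (F : (ℤ × ℤ) × (ℤ × ℤ) → ℂ) (hF : Summable F) :
    ∑' z, F z =
      (∑' y : (ℤ × ℤ) × (ℤ × ℤ), F (pairEquiv ((true, true), y)) +
        ∑' y : (ℤ × ℤ) × (ℤ × ℤ), F (pairEquiv ((true, false), y))) +
      (∑' y : (ℤ × ℤ) × (ℤ × ℤ), F (pairEquiv ((false, true), y)) +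
        ∑' y : (ℤ × ℤ) × (ℤ × ℤ), F (pairEquiv ((false, false), y))) := by
  rw [← pairEquiv.tsum_eq F]
  have hs : Summable fun w : (Bool × Bool) × ((ℤ × ℤ) × (ℤ × ℤ)) => F (pairEquiv w) :=
    pairEquiv.summable_iff.mpr hF
  rw [Summable.tsum_prod' hs fun b => hs.prod_factor b, tsum_fintype]
  rw [Fintype.sum_prod_type]
  simp only [Fintype.sum_bool]

lemma tsum_zero_of_neg (F : (ℤ × ℤ) × (ℤ × ℤ) → ℂ)
    (ι : ((ℤ × ℤ) × (ℤ × ℤ)) ≃ ((ℤ × ℤ) × (ℤ × ℤ)))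
    (h : ∀ y, F (ι y) = -F y) : ∑' y, F y = 0 := by
  have : ∑' y, F y = -∑' y, F y := by
    calc ∑' y, F y = ∑' y, F (ι y) := (ι.tsum_eq F).symm
    _ = ∑' y, -F y := by simp only [h]
    _ = -∑' y, F y := tsum_neg
  exact CharZero.eq_neg_self_iff.mp this

lemma diag_eq (F : (ℤ × ℤ) × (ℤ × ℤ) → ℂ) (G H : ℤ × ℤ → ℂ)
    (ψ : ((ℤ × ℤ) × (ℤ × ℤ)) ≃ ((ℤ × ℤ) × (ℤ × ℤ)))
    (hG : Summable fun p => ‖G p‖) (hH : Summable fun p => ‖H p‖)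
    (hpt : ∀ w, F (ψ w) = G w.1 * H w.2) :
    ∑' y, F y = (∑' p, G p) * (∑' p, H p) := by
  rw [← ψ.tsum_eq F, tsum_mul_tsum_of_summable_norm hG hH]
  exact tsum_congr hpt

/-! ### Expressing the relevant theta values in canonical form -/

lemma theta_0011 (σ₁ σ₂ σ₁₂ : ℂ) :
    theta σ₁ σ₂ σ₁₂ 0 0 1 1 0 0 = ∑' p : ℤ × ℤ, Tm σ₁ σ₂ σ₁₂ 0 1 0 p := by
  simp only [theta, Tm]
  refine tsum_congr fun p => ?_
  congr 1
  push_cast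
  ring

lemma theta_0000 (σ₁ σ₂ σ₁₂ : ℂ) :
    theta σ₁ σ₂ σ₁₂ 0 0 0 0 0 0 = ∑' p : ℤ × ℤ, Tm σ₁ σ₂ σ₁₂ 0 0 0 p := by
  simp only [theta, Tm]
  refine tsum_congr fun p => ?_
  congr 1
  push_cast
  ring

lemma theta_1111 (σ₁ σ₂ σ₁₂ : ℂ) :
    theta σ₁ σ₂ σ₁₂ 1 1 1 1 0 0 = ∑' p : ℤ × ℤ, Tm σ₁ σ₂ σ₁₂ (1/2) 1 1 p := by
  simp only [theta, Tm]
  refine tsum_congr fun p => ?_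
  congr 1
  push_cast
  ring

lemma theta_1100 (σ₁ σ₂ σ₁₂ : ℂ) :
    theta σ₁ σ₂ σ₁₂ 1 1 0 0 0 0 = ∑' p : ℤ × ℤ, Tm σ₁ σ₂ σ₁₂ (1/2) 0 0 p := by
  simp only [theta, Tm]
  refine tsum_congr fun p => ?_
  congr 1
  push_cast
  ring

/-! ### The two identities, in canonical form -/

section identities

variable {σ₁ σ₂ σ₁₂ : ℂ} (h₁ : 0 < σ₁.im) (h₂ : 0 < σ₂.im)
  (h12 : σ₁₂.im ^ 2 < σ₁.im * σ₂.im)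

include h₁ in
lemma double_im₁ : 0 < (2 * σ₁).im := by
  rw [show (2:ℂ) * σ₁ = σ₁ + σ₁ by ring, Complex.add_im]; linarith

include h₂ in
lemma double_im₂ : 0 < (2 * σ₂).im := by
  rw [show (2:ℂ) * σ₂ = σ₂ + σ₂ by ring, Complex.add_im]; linarith

include h12 in
lemma double_im₁₂ : (2 * σ₁₂).im ^ 2 < (2 * σ₁).im * (2 * σ₂).im := by
  rw [show (2:ℂ) * σ₁ = σ₁ + σ₁ by ring, show (2:ℂ) * σ₂ = σ₂ + σ₂ by ring,
    show (2:ℂ) * σ₁₂ = σ₁₂ + σ₁₂ by ring]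
  simp only [Complex.add_im]
  nlinarith

include h₁ h₂ h12 in
lemma identity_one :
    (∑' p : ℤ × ℤ, Tm σ₁ σ₂ σ₁₂ 0 1 0 p) * (∑' p : ℤ × ℤ, Tm σ₁ σ₂ σ₁₂ 0 0 0 p) =
      (∑' p : ℤ × ℤ, Tm (2*σ₁) (2*σ₂) (2*σ₁₂) 0 1 0 p) ^ 2 +
      (∑' p : ℤ × ℤ, Tm (2*σ₁) (2*σ₂) (2*σ₁₂) (1/2) 1 1 p) ^ 2 := by
  have hd₁ : 0 < (2*σ₁).im := double_im₁ h₁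
  have hd₂ : 0 < (2*σ₂).im := double_im₂ h₂
  have hd12 : (2*σ₁₂).im ^ 2 < (2*σ₁).im * (2*σ₂).im := double_im₁₂ h12
  have hA := summable_norm_Tm h₁ h₂ h12 0 1 0
  have hB := summable_norm_Tm h₁ h₂ h12 0 0 0
  have hX := summable_norm_Tm hd₁ hd₂ hd12 0 1 0
  have hZ := summable_norm_Tm hd₁ hd₂ hd12 (1/2) 1 1
  rw [tsum_mul_tsum_of_summable_norm hA hB,
    tsum_eq_four _ (summable_mul_of_summable_norm hA hB)]
  have hTT : (∑' y : (ℤ × ℤ) × (ℤ × ℤ),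
      Tm σ₁ σ₂ σ₁₂ 0 1 0 (pairEquiv ((true, true), y)).1 *
        Tm σ₁ σ₂ σ₁₂ 0 0 0 (pairEquiv ((true, true), y)).2) =
      (∑' p : ℤ × ℤ, Tm (2*σ₁) (2*σ₂) (2*σ₁₂) (1/2) 1 1 p) *
      (∑' p : ℤ × ℤ, Tm (2*σ₁) (2*σ₂) (2*σ₁₂) (1/2) 1 1 p) := by
    refine diag_eq _ _ _ (Equiv.prodProdProdComm ℤ ℤ ℤ ℤ) hZ hZ ?_
    rintro ⟨⟨a, c⟩, ⟨b, d⟩⟩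
    simp only [Equiv.prodProdProdComm_apply, pairEquiv, Equiv.coe_fn_mk, iB, cond_true, Tm]
    rw [← Complex.exp_add, ← Complex.exp_add]
    congr 1
    push_cast
    ring
  have hFF : (∑' y : (ℤ × ℤ) × (ℤ × ℤ),
      Tm σ₁ σ₂ σ₁₂ 0 1 0 (pairEquiv ((false, false), y)).1 *
        Tm σ₁ σ₂ σ₁₂ 0 0 0 (pairEquiv ((false, false), y)).2) =
      (∑' p : ℤ × ℤ, Tm (2*σ₁) (2*σ₂) (2*σ₁₂) 0 1 0 p) *
      (∑' p : ℤ × ℤ, Tm (2*σ₁) (2*σ₂) (2*σ₁₂) 0 1 0 p) := by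
    refine diag_eq _ _ _ (Equiv.prodProdProdComm ℤ ℤ ℤ ℤ) hX hX ?_
    rintro ⟨⟨a, c⟩, ⟨b, d⟩⟩
    simp only [Equiv.prodProdProdComm_apply, pairEquiv, Equiv.coe_fn_mk, iB, cond_false, Tm]
    rw [← Complex.exp_add, ← Complex.exp_add]
    congr 1
    push_cast
    ring
  have hFT : (∑' y : (ℤ × ℤ) × (ℤ × ℤ),
      Tm σ₁ σ₂ σ₁₂ 0 1 0 (pairEquiv ((false, true), y)).1 *
        Tm σ₁ σ₂ σ₁₂ 0 0 0 (pairEquiv ((false, true), y)).2) = 0 := by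
    refine tsum_zero_of_neg _
      (Equiv.prodCongr (Equiv.prodCongr (Equiv.neg ℤ) (Equiv.refl ℤ))
        (Equiv.prodCongr ((Equiv.addRight (1:ℤ)).trans (Equiv.neg ℤ)) (Equiv.refl ℤ))) ?_
    rintro ⟨⟨a, b⟩, ⟨c, d⟩⟩
    simp only [Equiv.prodCongr_apply, Equiv.coe_trans, Function.comp_apply,
      Equiv.coe_addRight, Equiv.neg_apply, Equiv.refl_apply, Prod.map_apply,
      pairEquiv, Equiv.coe_fn_mk, iB, cond_true, cond_false, Tm]
    rw [← Complex.exp_add, ← Complex.exp_add]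
    exact exp_eq_neg_exp (-(a+c+1)) (by push_cast; ring)
  have hTF : (∑' y : (ℤ × ℤ) × (ℤ × ℤ),
      Tm σ₁ σ₂ σ₁₂ 0 1 0 (pairEquiv ((true, false), y)).1 *
        Tm σ₁ σ₂ σ₁₂ 0 0 0 (pairEquiv ((true, false), y)).2) = 0 := by
    refine tsum_zero_of_neg _
      (Equiv.prodCongr (Equiv.prodCongr ((Equiv.addRight (1:ℤ)).trans (Equiv.neg ℤ))
        (Equiv.refl ℤ)) (Equiv.prodCongr (Equiv.neg ℤ) (Equiv.refl ℤ))) ?_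
    rintro ⟨⟨a, b⟩, ⟨c, d⟩⟩
    simp only [Equiv.prodCongr_apply, Equiv.coe_trans, Function.comp_apply,
      Equiv.coe_addRight, Equiv.neg_apply, Equiv.refl_apply, Prod.map_apply,
      pairEquiv, Equiv.coe_fn_mk, iB, cond_true, cond_false, Tm]
    rw [← Complex.exp_add, ← Complex.exp_add]
    exact exp_eq_neg_exp (-(a+c+1)) (by push_cast; ring)
  rw [hTT, hFF, hFT, hTF]
  ring

include h₁ h₂ h12 in
lemma identity_two :
    (∑' p : ℤ × ℤ, Tm σ₁ σ₂ σ₁₂ (1/2) 1 1 p) * (∑' p : ℤ × ℤ, Tm σ₁ σ₂ σ₁₂ (1/2) 0 0 p) =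
      2 * (∑' p : ℤ × ℤ, Tm (2*σ₁) (2*σ₂) (2*σ₁₂) 0 1 0 p) *
        (∑' p : ℤ × ℤ, Tm (2*σ₁) (2*σ₂) (2*σ₁₂) (1/2) 1 1 p) := by
  have hd₁ : 0 < (2*σ₁).im := double_im₁ h₁
  have hd₂ : 0 < (2*σ₂).im := double_im₂ h₂
  have hd12 : (2*σ₁₂).im ^ 2 < (2*σ₁).im * (2*σ₂).im := double_im₁₂ h12
  have hA := summable_norm_Tm h₁ h₂ h12 (1/2) 1 1
  have hB := summable_norm_Tm h₁ h₂ h12 (1/2) 0 0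
  have hX := summable_norm_Tm hd₁ hd₂ hd12 0 1 0
  have hZ := summable_norm_Tm hd₁ hd₂ hd12 (1/2) 1 1
  rw [tsum_mul_tsum_of_summable_norm hA hB,
    tsum_eq_four _ (summable_mul_of_summable_norm hA hB)]
  have hFF : (∑' y : (ℤ × ℤ) × (ℤ × ℤ),
      Tm σ₁ σ₂ σ₁₂ (1/2) 1 1 (pairEquiv ((false, false), y)).1 *
        Tm σ₁ σ₂ σ₁₂ (1/2) 0 0 (pairEquiv ((false, false), y)).2) =
      (∑' p : ℤ × ℤ, Tm (2*σ₁) (2*σ₂) (2*σ₁₂) (1/2) 1 1 p) *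
      (∑' p : ℤ × ℤ, Tm (2*σ₁) (2*σ₂) (2*σ₁₂) 0 1 0 p) := by
    refine diag_eq _ _ _ (Equiv.prodProdProdComm ℤ ℤ ℤ ℤ) hZ hX ?_
    rintro ⟨⟨a, c⟩, ⟨b, d⟩⟩
    simp only [Equiv.prodProdProdComm_apply, pairEquiv, Equiv.coe_fn_mk, iB, cond_false, Tm]
    rw [← Complex.exp_add, ← Complex.exp_add]
    congr 1
    push_cast
    ring
  have hTT : (∑' y : (ℤ × ℤ) × (ℤ × ℤ),
      Tm σ₁ σ₂ σ₁₂ (1/2) 1 1 (pairEquiv ((true, true), y)).1 *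
        Tm σ₁ σ₂ σ₁₂ (1/2) 0 0 (pairEquiv ((true, true), y)).2) =
      (∑' p : ℤ × ℤ, Tm (2*σ₁) (2*σ₂) (2*σ₁₂) 0 1 0 p) *
      (∑' p : ℤ × ℤ, Tm (2*σ₁) (2*σ₂) (2*σ₁₂) (1/2) 1 1 p) := by
    refine diag_eq _ _ _
      ((Equiv.prodCongr (Equiv.prodCongr (Equiv.addRight (-1:ℤ)) (Equiv.addRight (-1:ℤ)))
        (Equiv.refl _)).trans (Equiv.prodProdProdComm ℤ ℤ ℤ ℤ)) hX hZ ?_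
    rintro ⟨⟨a, c⟩, ⟨b, d⟩⟩
    simp only [Equiv.trans_apply, Equiv.prodCongr_apply, Equiv.coe_addRight,
      Equiv.refl_apply, Prod.map_apply, Equiv.prodProdProdComm_apply,
      pairEquiv, Equiv.coe_fn_mk, iB, cond_true, Tm]
    rw [← Complex.exp_add, ← Complex.exp_add]
    congr 1
    push_cast
    ring
  have hFT : (∑' y : (ℤ × ℤ) × (ℤ × ℤ),
      Tm σ₁ σ₂ σ₁₂ (1/2) 1 1 (pairEquiv ((false, true), y)).1 *
        Tm σ₁ σ₂ σ₁₂ (1/2) 0 0 (pairEquiv ((false, true), y)).2) = 0 := by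
    refine tsum_zero_of_neg _
      (Equiv.prodCongr (Equiv.prodCongr ((Equiv.addRight (1:ℤ)).trans (Equiv.neg ℤ))
        (Equiv.refl ℤ))
        (Equiv.prodCongr ((Equiv.addRight (2:ℤ)).trans (Equiv.neg ℤ)) (Equiv.refl ℤ))) ?_
    rintro ⟨⟨a, b⟩, ⟨c, d⟩⟩
    simp only [Equiv.prodCongr_apply, Equiv.coe_trans, Function.comp_apply,
      Equiv.coe_addRight, Equiv.neg_apply, Equiv.refl_apply, Prod.map_apply,
      pairEquiv, Equiv.coe_fn_mk, iB, cond_true, cond_false, Tm]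
    rw [← Complex.exp_add, ← Complex.exp_add]
    exact exp_eq_neg_exp (-(a+c+2)) (by push_cast; ring)
  have hTF : (∑' y : (ℤ × ℤ) × (ℤ × ℤ),
      Tm σ₁ σ₂ σ₁₂ (1/2) 1 1 (pairEquiv ((true, false), y)).1 *
        Tm σ₁ σ₂ σ₁₂ (1/2) 0 0 (pairEquiv ((true, false), y)).2) = 0 := by
    refine tsum_zero_of_neg _
      (Equiv.prodCongr (Equiv.prodCongr ((Equiv.addRight (2:ℤ)).trans (Equiv.neg ℤ))
        (Equiv.refl ℤ))
        (Equiv.prodCongr ((Equiv.addRight (1:ℤ)).trans (Equiv.neg ℤ)) (Equiv.refl ℤ))) ?_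
    rintro ⟨⟨a, b⟩, ⟨c, d⟩⟩
    simp only [Equiv.prodCongr_apply, Equiv.coe_trans, Function.comp_apply,
      Equiv.coe_addRight, Equiv.neg_apply, Equiv.refl_apply, Prod.map_apply,
      pairEquiv, Equiv.coe_fn_mk, iB, cond_true, cond_false, Tm]
    rw [← Complex.exp_add, ← Complex.exp_add]
    exact exp_eq_neg_exp (-(a+c+2)) (by push_cast; ring)
  rw [hTT, hFF, hFT, hTF]
  ring

end identities

theorem constants_relations_11 (τ₁ τ₂ τ₁₂ : ℂ)
    (hτ₁ : 0 < τ₁.im) (hτ₂ : 0 < τ₂.im) (hτ : τ₁₂.im ^ 2 < τ₁.im * τ₂.im) :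
    theta τ₁ τ₂ τ₁₂ 0 0 1 1 0 0 * theta τ₁ τ₂ τ₁₂ 0 0 0 0 0 0 =
        Theta2 τ₁ τ₂ τ₁₂ 0 0 1 1 0 0 ^ 2 + Theta2 τ₁ τ₂ τ₁₂ 1 1 1 1 0 0 ^ 2 ∧
      theta τ₁ τ₂ τ₁₂ 1 1 1 1 0 0 * theta τ₁ τ₂ τ₁₂ 1 1 0 0 0 0 =
        2 * Theta2 τ₁ τ₂ τ₁₂ 0 0 1 1 0 0 * Theta2 τ₁ τ₂ τ₁₂ 1 1 1 1 0 0 := by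
  constructor
  · rw [theta_0011, theta_0000, Theta2, Theta2, theta_0011, theta_1111]
    exact identity_one hτ₁ hτ₂ hτ
  · rw [theta_1111, theta_1100, Theta2, Theta2, theta_0011, theta_1111]
    exact identity_two hτ₁ hτ₂ hτ
end

section
/- Half-characteristic constants relations connecting the D sector with the A sector: θ[1,1;0,0](0,0) · θ[0,0;0,0](0,0) = 2 · ( Θ[1/2,1/2;0,0](0,0)² + Θ[1/2,−1/2;0,0](0,0)² ) and θ[0,1;0,0](0,0) · θ[1,0;0,0](0,0) = 4 · Θ[1/2,1/2;0,0](0,0) · Θ[1/2,−1/2;0,0](0,0). -/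
open Complex

noncomputable section AuxTheta

/-- The pure quadratic exponential appearing in genus-two theta series. -/
def qt (τ₁ τ₂ τ₁₂ : ℂ) (u v : ℂ) : ℂ :=
  Complex.exp ((Real.pi : ℂ) * Complex.I * (τ₁ * u ^ 2 + τ₂ * v ^ 2 + 2 * τ₁₂ * u * v))

/-- The genus-two "null werte" sum with complex offsets. -/
def Sq (τ₁ τ₂ τ₁₂ : ℂ) (a b : ℂ) : ℂ :=
  ∑' p : ℤ × ℤ, qt τ₁ τ₂ τ₁₂ ((p.1 : ℂ) + a) ((p.2 : ℂ) + b)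

end AuxTheta

lemma qt_neg (τ₁ τ₂ τ₁₂ u v : ℂ) : qt τ₁ τ₂ τ₁₂ (-u) (-v) = qt τ₁ τ₂ τ₁₂ u v := by
  unfold qt; ring_nf

lemma qt_mul (τ₁ τ₂ τ₁₂ u v u' v' : ℂ) :
    qt τ₁ τ₂ τ₁₂ u v * qt τ₁ τ₂ τ₁₂ u' v' =
      qt (2*τ₁) (2*τ₂) (2*τ₁₂) ((u+u')/2) ((v+v')/2) *
        qt (2*τ₁) (2*τ₂) (2*τ₁₂) ((u-u')/2) ((v-v')/2) := by
  unfold qt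
  rw [← Complex.exp_add, ← Complex.exp_add]
  congr 1
  ring

lemma norm_qt (τ₁ τ₂ τ₁₂ : ℂ) (r₁ r₂ : ℝ) :
    ‖qt τ₁ τ₂ τ₁₂ (r₁ : ℂ) (r₂ : ℂ)‖ =
      Real.exp (-Real.pi * (τ₁.im * r₁ ^ 2 + τ₂.im * r₂ ^ 2 + 2 * τ₁₂.im * r₁ * r₂)) := by
  rw [qt, Complex.norm_exp]
  congr 1
  simp only [Complex.add_re, Complex.mul_re, Complex.mul_im, Complex.add_im,
    Complex.ofReal_re, Complex.ofReal_im, Complex.I_re, Complex.I_im, pow_two,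
    Complex.re_ofNat, Complex.im_ofNat]
  ring

lemma summable_exp_shift {c : ℝ} (hc : 0 < c) (α : ℝ) :
    Summable fun n : ℤ => Real.exp (-c * ((n : ℝ) + α) ^ 2) := by
  have h := summable_pow_mul_jacobiTheta₂_term_bound (c * |α| / Real.pi)
    (T := c / Real.pi) (by positivity) 0
  refine h.of_nonneg_of_le (fun n => (Real.exp_pos _).le) fun n => ?_
  simp only [pow_zero, one_mul, Int.cast_abs]
  rw [Real.exp_le_exp]
  have h1 : α * n ≥ -(|α| * |(n:ℝ)|) := by
    rw [← abs_mul]; exact neg_abs_le _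
  have h2 : (0:ℝ) ≤ c * α ^ 2 := by positivity
  have hπ : (0:ℝ) < Real.pi := Real.pi_pos
  have e1 : -Real.pi * (c / Real.pi * (n:ℝ) ^ 2 - 2 * (c * |α| / Real.pi) * |(n:ℝ)|)
      = -c * (n:ℝ)^2 + 2 * c * |α| * |(n:ℝ)| := by
    field_simp; ring
  rw [e1]
  nlinarith [hc]

lemma summable_qt (τ₁ τ₂ τ₁₂ : ℂ)
    (hτ₁ : 0 < τ₁.im) (hτ₂ : 0 < τ₂.im) (hτ : τ₁₂.im ^ 2 < τ₁.im * τ₂.im) (a b : ℝ) :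
    Summable fun p : ℤ × ℤ => ‖qt τ₁ τ₂ τ₁₂ ((p.1 : ℂ) + (a : ℂ)) ((p.2 : ℂ) + (b : ℂ))‖ := by
  set A := τ₁.im; set B := τ₂.im; set C := τ₁₂.im
  set c : ℝ := (A * B - C ^ 2) / (2 * (A + B)) with hc_def
  have hAB : 0 < A + B := by positivity
  have hc : 0 < c := by apply div_pos; nlinarith; positivity
  have hcA : c < A := by
    rw [hc_def, div_lt_iff₀ (by positivity)]; nlinarith [sq_nonneg C, sq_nonneg (A - B)]
  have hcB : c < B := by
    rw [hc_def, div_lt_iff₀ (by positivity)]; nlinarith [sq_nonneg C, sq_nonneg (A - B)]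
  have hdisc : C ^ 2 ≤ (A - c) * (B - c) := by
    have h1 : c * (2 * (A + B)) = A * B - C ^ 2 := by
      rw [hc_def]; field_simp
    nlinarith [sq_nonneg c]
  have key : ∀ u v : ℝ, c * (u ^ 2 + v ^ 2) ≤ A * u ^ 2 + B * v ^ 2 + 2 * C * u * v := by
    intro u v
    nlinarith [sq_nonneg ((A - c) * u + C * v), sub_pos.mpr hcA, sq_nonneg v,
      mul_nonneg (mul_nonneg (sub_pos.mpr hcA).le (sub_nonneg.mpr hdisc)) (sq_nonneg v)]
  have hg : Summable fun p : ℤ × ℤ =>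
      Real.exp (-(Real.pi * c) * ((p.1 : ℝ) + a) ^ 2) *
        Real.exp (-(Real.pi * c) * ((p.2 : ℝ) + b) ^ 2) := by
    have hπc : 0 < Real.pi * c := by positivity
    exact Summable.mul_of_nonneg
      (f := fun n : ℤ => Real.exp (-(Real.pi * c) * ((n : ℝ) + a) ^ 2))
      (g := fun n : ℤ => Real.exp (-(Real.pi * c) * ((n : ℝ) + b) ^ 2))
      (summable_exp_shift hπc a) (summable_exp_shift hπc b)
      (fun n => (Real.exp_pos _).le) (fun n => (Real.exp_pos _).le)
  refine hg.of_nonneg_of_le (fun p => norm_nonneg _) fun p => ?_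
  have e1 : ((p.1 : ℂ) + (a : ℂ)) = (((p.1 : ℝ) + a : ℝ) : ℂ) := by push_cast; ring
  have e2 : ((p.2 : ℂ) + (b : ℂ)) = (((p.2 : ℝ) + b : ℝ) : ℂ) := by push_cast; ring
  rw [e1, e2, norm_qt, ← Real.exp_add, Real.exp_le_exp]
  have := key ((p.1 : ℝ) + a) ((p.2 : ℝ) + b)
  nlinarith [Real.pi_pos]

/-- Parity decomposition of `ℤ² × ℤ²`. -/
def psiEquiv : (Bool × Bool) × (ℤ × ℤ) × (ℤ × ℤ) ≃ (ℤ × ℤ) × (ℤ × ℤ) where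
  toFun w :=
    ((w.2.1.1 + w.2.2.1 + cond w.1.1 1 0, w.2.1.2 + w.2.2.2 + cond w.1.2 1 0),
      (w.2.1.1 - w.2.2.1, w.2.1.2 - w.2.2.2))
  invFun z :=
    ((decide ((z.1.1 + z.2.1) % 2 = 1), decide ((z.1.2 + z.2.2) % 2 = 1)),
      ((z.1.1 + z.2.1 - (z.1.1 + z.2.1) % 2) / 2, (z.1.2 + z.2.2 - (z.1.2 + z.2.2) % 2) / 2),
      ((z.1.1 + z.2.1 - (z.1.1 + z.2.1) % 2) / 2 - z.2.1,
        (z.1.2 + z.2.2 - (z.1.2 + z.2.2) % 2) / 2 - z.2.2))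
  left_inv := by
    rintro ⟨⟨ε₁, ε₂⟩, ⟨k₁, k₂⟩, ⟨j₁, j₂⟩⟩
    cases ε₁ <;> cases ε₂ <;>
      simp only [cond_true, cond_false, Prod.mk.injEq, decide_eq_true_eq,
        decide_eq_false_iff_not] <;> omega
  right_inv := by
    rintro ⟨⟨m₁, m₂⟩, ⟨n₁, n₂⟩⟩
    obtain h₁ | h₁ := Int.emod_two_eq (m₁ + n₁) <;> obtain h₂ | h₂ := Int.emod_two_eq (m₂ + n₂) <;>
      simp only [h₁, h₂, decide_eq_true_eq, Prod.mk.injEq] <;>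
      norm_num <;> omega

lemma Sq_shift (τ₁ τ₂ τ₁₂ : ℂ) (a b : ℂ) (n₁ n₂ : ℤ) :
    Sq τ₁ τ₂ τ₁₂ (a - n₁) (b - n₂) = Sq τ₁ τ₂ τ₁₂ a b := by
  unfold Sq
  rw [← Equiv.tsum_eq (Equiv.prodCongr (Equiv.subRight n₁) (Equiv.subRight n₂))
      (fun p : ℤ × ℤ => qt τ₁ τ₂ τ₁₂ ((p.1 : ℂ) + a) ((p.2 : ℂ) + b))]
  refine tsum_congr fun p => ?_
  have e1 : (((p.1 - n₁ : ℤ) : ℂ)) + a = (p.1 : ℂ) + (a - n₁) := by push_cast; ring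
  have e2 : (((p.2 - n₂ : ℤ) : ℂ)) + b = (p.2 : ℂ) + (b - n₂) := by push_cast; ring
  simp only [Equiv.prodCongr_apply, Prod.map_fst, Prod.map_snd, Equiv.subRight_apply]
  rw [e1, e2]

lemma Sq_neg (τ₁ τ₂ τ₁₂ : ℂ) (a b : ℂ) :
    Sq τ₁ τ₂ τ₁₂ (-a) (-b) = Sq τ₁ τ₂ τ₁₂ a b := by
  unfold Sq
  rw [← Equiv.tsum_eq (Equiv.prodCongr (Equiv.neg ℤ) (Equiv.neg ℤ))
      (fun p : ℤ × ℤ => qt τ₁ τ₂ τ₁₂ ((p.1 : ℂ) + a) ((p.2 : ℂ) + b))]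
  refine tsum_congr fun p => ?_
  have e1 : (((-p.1 : ℤ) : ℂ)) + a = -((p.1 : ℂ) + (-a)) := by push_cast; ring
  have e2 : (((-p.2 : ℤ) : ℂ)) + b = -((p.2 : ℂ) + (-b)) := by push_cast; ring
  simp only [Equiv.prodCongr_apply, Prod.map_fst, Prod.map_snd, Equiv.neg_apply]
  rw [e1, e2, qt_neg]

lemma qt_congr (τ₁ τ₂ τ₁₂ : ℂ) {u v u' v' : ℂ} (h1 : u = u') (h2 : v = v') :
    qt τ₁ τ₂ τ₁₂ u v = qt τ₁ τ₂ τ₁₂ u' v' := by rw [h1, h2]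

lemma summable_qt_c (τ₁ τ₂ τ₁₂ : ℂ)
    (hτ₁ : 0 < τ₁.im) (hτ₂ : 0 < τ₂.im) (hτ : τ₁₂.im ^ 2 < τ₁.im * τ₂.im) (a b : ℝ)
    {a' b' : ℂ} (ha : (a : ℂ) = a') (hb : (b : ℂ) = b') :
    Summable fun p : ℤ × ℤ => ‖qt τ₁ τ₂ τ₁₂ ((p.1 : ℂ) + a') ((p.2 : ℂ) + b')‖ := by
  rw [← ha, ← hb]; exact summable_qt τ₁ τ₂ τ₁₂ hτ₁ hτ₂ hτ a b

lemma Sq_mul (τ₁ τ₂ τ₁₂ : ℂ)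
    (hτ₁ : 0 < τ₁.im) (hτ₂ : 0 < τ₂.im) (hτ : τ₁₂.im ^ 2 < τ₁.im * τ₂.im) (a b a' b' : ℝ) :
    Sq τ₁ τ₂ τ₁₂ (a : ℂ) (b : ℂ) * Sq τ₁ τ₂ τ₁₂ (a' : ℂ) (b' : ℂ) =
      Sq (2*τ₁) (2*τ₂) (2*τ₁₂) (((a:ℂ)+a'+0)/2) (((b:ℂ)+b'+0)/2) *
        Sq (2*τ₁) (2*τ₂) (2*τ₁₂) (((a:ℂ)-a'+0)/2) (((b:ℂ)-b'+0)/2) +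
      Sq (2*τ₁) (2*τ₂) (2*τ₁₂) (((a:ℂ)+a'+0)/2) (((b:ℂ)+b'+1)/2) *
        Sq (2*τ₁) (2*τ₂) (2*τ₁₂) (((a:ℂ)-a'+0)/2) (((b:ℂ)-b'+1)/2) +
      Sq (2*τ₁) (2*τ₂) (2*τ₁₂) (((a:ℂ)+a'+1)/2) (((b:ℂ)+b'+0)/2) *
        Sq (2*τ₁) (2*τ₂) (2*τ₁₂) (((a:ℂ)-a'+1)/2) (((b:ℂ)-b'+0)/2) +
      Sq (2*τ₁) (2*τ₂) (2*τ₁₂) (((a:ℂ)+a'+1)/2) (((b:ℂ)+b'+1)/2) *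
        Sq (2*τ₁) (2*τ₂) (2*τ₁₂) (((a:ℂ)-a'+1)/2) (((b:ℂ)-b'+1)/2) := by
  have h2τ₁ : 0 < (2*τ₁).im := by
    have : (2*τ₁).im = 2 * τ₁.im := by simp [Complex.mul_im]
    rw [this]; linarith
  have h2τ₂ : 0 < (2*τ₂).im := by
    have : (2*τ₂).im = 2 * τ₂.im := by simp [Complex.mul_im]
    rw [this]; linarith
  have h2τ : (2*τ₁₂).im ^ 2 < (2*τ₁).im * (2*τ₂).im := by
    have e1 : (2*τ₁).im = 2 * τ₁.im := by simp [Complex.mul_im]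
    have e2 : (2*τ₂).im = 2 * τ₂.im := by simp [Complex.mul_im]
    have e3 : (2*τ₁₂).im = 2 * τ₁₂.im := by simp [Complex.mul_im]
    rw [e1, e2, e3]; nlinarith
  have hf := summable_qt τ₁ τ₂ τ₁₂ hτ₁ hτ₂ hτ a b
  have hg := summable_qt τ₁ τ₂ τ₁₂ hτ₁ hτ₂ hτ a' b'
  set f : ℤ × ℤ → ℂ := fun p => qt τ₁ τ₂ τ₁₂ ((p.1 : ℂ) + (a:ℂ)) ((p.2 : ℂ) + (b:ℂ)) with hfdef
  set g : ℤ × ℤ → ℂ := fun p => qt τ₁ τ₂ τ₁₂ ((p.1 : ℂ) + (a':ℂ)) ((p.2 : ℂ) + (b':ℂ)) with hgdef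
  set G : (Bool × Bool) × (ℤ × ℤ) × (ℤ × ℤ) → ℂ := fun w =>
    qt (2*τ₁) (2*τ₂) (2*τ₁₂)
        ((w.2.1.1 : ℂ) + ((a:ℂ)+a'+ cond w.1.1 1 0)/2) ((w.2.1.2 : ℂ) + ((b:ℂ)+b'+ cond w.1.2 1 0)/2) *
      qt (2*τ₁) (2*τ₂) (2*τ₁₂)
        ((w.2.2.1 : ℂ) + ((a:ℂ)-a'+ cond w.1.1 1 0)/2) ((w.2.2.2 : ℂ) + ((b:ℂ)-b'+ cond w.1.2 1 0)/2)
    with hGdef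
  have hpt : ∀ w, f (psiEquiv w).1 * g (psiEquiv w).2 = G w := by
    rintro ⟨⟨ε₁, ε₂⟩, ⟨k, j⟩⟩
    cases ε₁ <;> cases ε₂ <;>
      · simp only [hfdef, hgdef, hGdef, psiEquiv, Equiv.coe_fn_mk, cond_true, cond_false]
        rw [qt_mul]
        exact congrArg₂ (· * ·)
          (qt_congr _ _ _ (by push_cast; ring) (by push_cast; ring))
          (qt_congr _ _ _ (by push_cast; ring) (by push_cast; ring))
  have hFG : Summable fun z : (ℤ × ℤ) × (ℤ × ℤ) => f z.1 * g z.2 :=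
    summable_mul_of_summable_norm hf hg
  have hG : Summable G := by
    refine Summable.congr ?_ hpt
    exact (Equiv.summable_iff psiEquiv).2 hFG
  calc
    Sq τ₁ τ₂ τ₁₂ (a : ℂ) (b : ℂ) * Sq τ₁ τ₂ τ₁₂ (a' : ℂ) (b' : ℂ)
        = ∑' z : (ℤ × ℤ) × (ℤ × ℤ), f z.1 * g z.2 := tsum_mul_tsum_of_summable_norm hf hg
    _ = ∑' w : (Bool × Bool) × (ℤ × ℤ) × (ℤ × ℤ), f (psiEquiv w).1 * g (psiEquiv w).2 :=
        (Equiv.tsum_eq psiEquiv _).symm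
    _ = ∑' w, G w := tsum_congr hpt
    _ = ∑' ε : Bool × Bool, ∑' z : (ℤ × ℤ) × (ℤ × ℤ), G (ε, z) := Summable.tsum_prod hG
    _ = ∑ ε : Bool × Bool, ∑' z : (ℤ × ℤ) × (ℤ × ℤ), G (ε, z) := tsum_fintype _
    _ = _ := by
        rw [Fintype.sum_prod_type, Fintype.sum_bool, Fintype.sum_bool, Fintype.sum_bool]
        simp only [hGdef, cond_true, cond_false]
        simp only [Sq]
        rw [← tsum_mul_tsum_of_summable_norm
            (summable_qt_c _ _ _ h2τ₁ h2τ₂ h2τ ((a+a'+1)/2) ((b+b'+1)/2) (by push_cast; ring) (by push_cast; ring))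
            (summable_qt_c _ _ _ h2τ₁ h2τ₂ h2τ ((a-a'+1)/2) ((b-b'+1)/2) (by push_cast; ring) (by push_cast; ring)),
          ← tsum_mul_tsum_of_summable_norm
            (summable_qt_c _ _ _ h2τ₁ h2τ₂ h2τ ((a+a'+1)/2) ((b+b'+0)/2) (by push_cast; ring) (by push_cast; ring))
            (summable_qt_c _ _ _ h2τ₁ h2τ₂ h2τ ((a-a'+1)/2) ((b-b'+0)/2) (by push_cast; ring) (by push_cast; ring)),
          ← tsum_mul_tsum_of_summable_norm
            (summable_qt_c _ _ _ h2τ₁ h2τ₂ h2τ ((a+a'+0)/2) ((b+b'+1)/2) (by push_cast; ring) (by push_cast; ring))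
            (summable_qt_c _ _ _ h2τ₁ h2τ₂ h2τ ((a-a'+0)/2) ((b-b'+1)/2) (by push_cast; ring) (by push_cast; ring)),
          ← tsum_mul_tsum_of_summable_norm
            (summable_qt_c _ _ _ h2τ₁ h2τ₂ h2τ ((a+a'+0)/2) ((b+b'+0)/2) (by push_cast; ring) (by push_cast; ring))
            (summable_qt_c _ _ _ h2τ₁ h2τ₂ h2τ ((a-a'+0)/2) ((b-b'+0)/2) (by push_cast; ring) (by push_cast; ring))]
        ring


lemma Sq_congr (τ₁ τ₂ τ₁₂ : ℂ) {a b a' b' : ℂ} (h1 : a = a') (h2 : b = b') :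
    Sq τ₁ τ₂ τ₁₂ a b = Sq τ₁ τ₂ τ₁₂ a' b' := by rw [h1, h2]

lemma N1 (τ₁ τ₂ τ₁₂ : ℂ) : Sq τ₁ τ₂ τ₁₂ (3/4) (3/4) = Sq τ₁ τ₂ τ₁₂ (1/4) (1/4) :=
  calc Sq τ₁ τ₂ τ₁₂ (3/4) (3/4)
      = Sq τ₁ τ₂ τ₁₂ (-(1/4) - ((-1 : ℤ) : ℂ)) (-(1/4) - ((-1 : ℤ) : ℂ)) :=
        Sq_congr _ _ _ (by push_cast; norm_num) (by push_cast; norm_num)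
    _ = Sq τ₁ τ₂ τ₁₂ (-(1/4)) (-(1/4)) := Sq_shift _ _ _ _ _ _ _
    _ = Sq τ₁ τ₂ τ₁₂ (1/4) (1/4) := Sq_neg _ _ _ _ _

lemma N2 (τ₁ τ₂ τ₁₂ : ℂ) : Sq τ₁ τ₂ τ₁₂ (1/4) (3/4) = Sq τ₁ τ₂ τ₁₂ (1/4) (-(1/4)) :=
  calc Sq τ₁ τ₂ τ₁₂ (1/4) (3/4)
      = Sq τ₁ τ₂ τ₁₂ ((1/4) - ((0 : ℤ) : ℂ)) (-(1/4) - ((-1 : ℤ) : ℂ)) :=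
        Sq_congr _ _ _ (by push_cast; norm_num) (by push_cast; norm_num)
    _ = Sq τ₁ τ₂ τ₁₂ (1/4) (-(1/4)) := Sq_shift _ _ _ _ _ _ _

lemma N4 (τ₁ τ₂ τ₁₂ : ℂ) : Sq τ₁ τ₂ τ₁₂ (-(1/4)) (1/4) = Sq τ₁ τ₂ τ₁₂ (1/4) (-(1/4)) :=
  calc Sq τ₁ τ₂ τ₁₂ (-(1/4)) (1/4)
      = Sq τ₁ τ₂ τ₁₂ (-(1/4)) (-(-(1/4))) := Sq_congr _ _ _ rfl (by norm_num)
    _ = Sq τ₁ τ₂ τ₁₂ (1/4) (-(1/4)) := Sq_neg _ _ _ _ _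

lemma N3 (τ₁ τ₂ τ₁₂ : ℂ) : Sq τ₁ τ₂ τ₁₂ (3/4) (1/4) = Sq τ₁ τ₂ τ₁₂ (1/4) (-(1/4)) :=
  calc Sq τ₁ τ₂ τ₁₂ (3/4) (1/4)
      = Sq τ₁ τ₂ τ₁₂ (-(1/4) - ((-1 : ℤ) : ℂ)) ((1/4) - ((0 : ℤ) : ℂ)) :=
        Sq_congr _ _ _ (by push_cast; norm_num) (by push_cast; norm_num)
    _ = Sq τ₁ τ₂ τ₁₂ (-(1/4)) (1/4) := Sq_shift _ _ _ _ _ _ _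
    _ = Sq τ₁ τ₂ τ₁₂ (1/4) (-(1/4)) := N4 _ _ _

lemma N5 (τ₁ τ₂ τ₁₂ : ℂ) : Sq τ₁ τ₂ τ₁₂ (-(1/4)) (3/4) = Sq τ₁ τ₂ τ₁₂ (1/4) (1/4) :=
  calc Sq τ₁ τ₂ τ₁₂ (-(1/4)) (3/4)
      = Sq τ₁ τ₂ τ₁₂ (-(1/4)) (-(-(3/4))) := Sq_congr _ _ _ rfl (by norm_num)
    _ = Sq τ₁ τ₂ τ₁₂ (1/4) (-(3/4)) := Sq_neg _ _ _ _ _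
    _ = Sq τ₁ τ₂ τ₁₂ ((1/4) - ((0 : ℤ) : ℂ)) ((1/4) - ((1 : ℤ) : ℂ)) :=
        Sq_congr _ _ _ (by push_cast; norm_num) (by push_cast; norm_num)
    _ = Sq τ₁ τ₂ τ₁₂ (1/4) (1/4) := Sq_shift _ _ _ _ _ _ _


lemma theta_eq (τ₁ τ₂ τ₁₂ : ℂ) (a c : ℝ) :
    theta τ₁ τ₂ τ₁₂ a c 0 0 0 0 = Sq τ₁ τ₂ τ₁₂ ((a : ℂ)/2) ((c : ℂ)/2) := by
  unfold theta Sq qt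
  refine tsum_congr fun p => ?_
  norm_num

theorem half_characteristic_constants_DA (τ₁ τ₂ τ₁₂ : ℂ)
    (hτ₁ : 0 < τ₁.im) (hτ₂ : 0 < τ₂.im) (hτ : τ₁₂.im ^ 2 < τ₁.im * τ₂.im) :
    theta τ₁ τ₂ τ₁₂ 1 1 0 0 0 0 * theta τ₁ τ₂ τ₁₂ 0 0 0 0 0 0 =
        2 * (Theta2 τ₁ τ₂ τ₁₂ (1/2) (1/2) 0 0 0 0 ^ 2 +
          Theta2 τ₁ τ₂ τ₁₂ (1/2) (-(1/2)) 0 0 0 0 ^ 2) ∧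
      theta τ₁ τ₂ τ₁₂ 0 1 0 0 0 0 * theta τ₁ τ₂ τ₁₂ 1 0 0 0 0 0 =
        4 * Theta2 τ₁ τ₂ τ₁₂ (1/2) (1/2) 0 0 0 0 *
          Theta2 τ₁ τ₂ τ₁₂ (1/2) (-(1/2)) 0 0 0 0 := by
  have t11 : theta τ₁ τ₂ τ₁₂ 1 1 0 0 0 0 = Sq τ₁ τ₂ τ₁₂ (1/2) (1/2) := by
    rw [theta_eq]; exact Sq_congr _ _ _ (by push_cast; norm_num) (by push_cast; norm_num)
  have t00 : theta τ₁ τ₂ τ₁₂ 0 0 0 0 0 0 = Sq τ₁ τ₂ τ₁₂ 0 0 := by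
    rw [theta_eq]; exact Sq_congr _ _ _ (by push_cast; norm_num) (by push_cast; norm_num)
  have t01 : theta τ₁ τ₂ τ₁₂ 0 1 0 0 0 0 = Sq τ₁ τ₂ τ₁₂ 0 (1/2) := by
    rw [theta_eq]; exact Sq_congr _ _ _ (by push_cast; norm_num) (by push_cast; norm_num)
  have t10 : theta τ₁ τ₂ τ₁₂ 1 0 0 0 0 0 = Sq τ₁ τ₂ τ₁₂ (1/2) 0 := by
    rw [theta_eq]; exact Sq_congr _ _ _ (by push_cast; norm_num) (by push_cast; norm_num)
  have Tp : Theta2 τ₁ τ₂ τ₁₂ (1/2) (1/2) 0 0 0 0 = Sq (2*τ₁) (2*τ₂) (2*τ₁₂) (1/4) (1/4) := by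
    rw [Theta2, theta_eq]
    exact Sq_congr _ _ _ (by push_cast; norm_num) (by push_cast; norm_num)
  have Tm : Theta2 τ₁ τ₂ τ₁₂ (1/2) (-(1/2)) 0 0 0 0 =
      Sq (2*τ₁) (2*τ₂) (2*τ₁₂) (1/4) (-(1/4)) := by
    rw [Theta2, theta_eq]
    exact Sq_congr _ _ _ (by push_cast; norm_num) (by push_cast; norm_num)
  constructor
  · have H := Sq_mul τ₁ τ₂ τ₁₂ hτ₁ hτ₂ hτ (1/2) (1/2) 0 0
    push_cast at H
    norm_num at H
    rw [N1, N2, N3] at H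
    rw [t11, t00, Tp, Tm, H]
    ring
  · have H := Sq_mul τ₁ τ₂ τ₁₂ hτ₁ hτ₂ hτ 0 (1/2) (1/2) 0
    push_cast at H
    norm_num at H
    rw [N1, N2, N3, N4, N5] at H
    rw [t01, t10, Tp, Tm, H]
    ring
end
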